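/- Let a: {0,...,3^d - 1} -> S_d be defined as in the d-dimensional Meurthe curve: for a ternary number r, the inverse permutation a^{-1}(r) is obtained from the identity by moving all indices i with r_i in {0,1} to the front and reversing their order. Then for d >= 2, every permutation of S_d can be expressed as a composition of exactly (d+1)d(d-1)/2 permutations from the set {a(r) : r a d-digit ternary number}; consequently the Meurthe curves have neutral orientation. -/

import Mathlib

/-- The value sequence of the inverse of the Meurthe permutation of a `(n+1)`-digit
ternary number `r`: it is obtained from the identity permutation `(0, 1, ..., n)` by
moving all indices `h` with `r h ∈ {0, 1}` to the front and reversing their order,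
the indices `h` with `r h = 2` keeping their relative order at the back. -/
def meurtheInvList (n : ℕ) (r : Fin (n + 1) → Fin 3) : List (Fin (n + 1)) :=
  ((List.finRange (n + 1)).filter (fun h => r h ≠ 2)).reverse
    ++ (List.finRange (n + 1)).filter (fun h => r h = 2)
/-- A curve whose subregions (indexed by `ι`) carry the permutations `a : ι → S_d` has
*neutral orientation* if, for a uniformly random sequence `R` of subregion indices of
length `m`, the distribution of the composition `a(R)` of the corresponding
permutations converges, as `m → ∞`, to the uniform distribution on `S_d`, which assigns
probability `1/d!` to each permutation. -/
def NeutralOrientation {d : ℕ} {ι : Type} [Fintype ι]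
    (a : ι → Equiv.Perm (Fin d)) : Prop :=
  Filter.Tendsto
    (fun m : ℕ => fun σ : Equiv.Perm (Fin d) =>
      ((Finset.univ.filter
          (fun R : Fin m → ι => (List.ofFn (fun t => a (R t))).prod = σ)).card : ℝ)
        / (Fintype.card ι : ℝ) ^ m)
    Filter.atTop (nhds (fun _ => (Nat.factorial d : ℝ)⁻¹))

open Fin.NatCast Fin.CommRing

/-- Let `a` assign to each `d`-digit ternary number `r` (here `d = n + 2 ≥ 2`) the
Meurthe permutation, i.e. the permutation whose inverse is obtained from the identity
by moving all indices `i` with `r_i ∈ {0,1}` to the front and reversing their order.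
Then every permutation of `S_d` can be expressed as a composition of exactly
`(d+1)d(d-1)/2` permutations from the set `{a(r)}`; consequently the Meurthe curves
have neutral orientation. -/

theorem rot_pow (n k : ℕ) (x : Fin (n+1)) : ((finRotate (n+1))^k) x = x + (k : Fin (n+1)) := by
  induction k generalizing x with
  | zero => simp
  | succ k ih =>
      rw [pow_succ, Equiv.Perm.mul_apply, finRotate_succ_apply, ih]
      push_cast
      ring

theorem rot_pow_card (n : ℕ) : (finRotate (n+1))^(n+1) = 1 := by
  ext x
  rw [rot_pow]
  simp

theorem rot_pow_zero (n k : ℕ) (hk : k < n + 2) :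
    ((finRotate (n+2))^k) (0 : Fin (n+2)) = ⟨k, hk⟩ := by
  rw [rot_pow]
  simp [Fin.ext_iff, Fin.val_cast_of_lt hk]

theorem rot_pow_one (n k : ℕ) (hk : k + 1 < n + 2) :
    ((finRotate (n+2))^k) (1 : Fin (n+2)) = ⟨k+1, hk⟩ := by
  rw [rot_pow]
  have h1 : ((1 : Fin (n+2)) : ℕ) = 1 := rfl
  simp [Fin.ext_iff, Fin.add_def, Fin.val_cast_of_lt (by omega : k < n + 2), h1,
    Nat.mod_eq_of_lt hk, Nat.add_comm]


section
variable {n : ℕ} (a : (Fin (n + 2) → Fin 3) → Equiv.Perm (Fin (n + 2)))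
  (ha : ∀ (r : Fin (n + 2) → Fin 3) (i : Fin (n + 2)),
      (meurtheInvList (n + 1) r)[(i : ℕ)]? = some ((a r).symm i))

theorem a_eq_of (r : Fin (n+2) → Fin 3) (g : Equiv.Perm (Fin (n+2)))
    (h : ∀ x, (a r).symm (g x) = x) : a r = g := by
  ext x
  have := congrArg (a r) (h x)
  rw [Equiv.apply_symm_apply] at this
  exact congrArg _ this.symm

include ha

-- identity
theorem a_id : a (fun _ => 2) = 1 := by
  apply a_eq_of a
  intro x
  have h := ha (fun _ => 2) x
  have hl : meurtheInvList (n+1) (fun _ => 2) = List.finRange (n+2) := by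
    simp [meurtheInvList]
  rw [hl] at h
  have hx : (x : ℕ) < (List.finRange (n+2)).length := by simp [x.isLt]
  rw [List.getElem?_eq_getElem hx] at h
  simp only [List.getElem_finRange] at h
  have := Option.some.inj h
  simp only [Equiv.Perm.coe_one, id_eq]
  rw [← this]
  exact (Fin.ext (by simp)).symm
end

section
variable {n : ℕ} (a : (Fin (n + 2) → Fin 3) → Equiv.Perm (Fin (n + 2)))
  (ha : ∀ (r : Fin (n + 2) → Fin 3) (i : Fin (n + 2)),
      (meurtheInvList (n + 1) r)[(i : ℕ)]? = some ((a r).symm i))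

def rS (n : ℕ) : Fin (n+2) → Fin 3 := fun h => if (h : ℕ) < 2 then 0 else 2

theorem rS_list : meurtheInvList (n+1) (rS n)
    = 1 :: 0 :: (List.finRange n).map (fun x => x.succ.succ) := by
  have h2 : List.finRange (n+2)
      = 0 :: (1 : Fin (n+2)) :: (List.finRange n).map (fun x => x.succ.succ) := by
    rw [List.finRange_succ, List.finRange_succ, List.map_cons, List.map_map]
    rfl
  rw [meurtheInvList, h2]
  have e0 : rS n 0 = 0 := by simp [rS]
  have e1 : rS n 1 = 0 := by simp [rS]
  have e2 : ∀ x : Fin n, rS n x.succ.succ = 2 := by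
    intro x; simp [rS]
  simp [List.filter_cons, e0, e1, List.filter_map, Function.comp_def, e2]

include ha

theorem a_swap : a (rS n) = Equiv.swap 0 1 := by
  apply a_eq_of a
  intro x
  -- compute symm at arbitrary index i, as a function of i.val
  have key : ∀ i : Fin (n+2), (a (rS n)).symm i
      = (1 :: 0 :: (List.finRange n).map (fun x => x.succ.succ) : List (Fin (n+2)))[(i:ℕ)]?.getD 0 := by
    intro i
    have h := ha (rS n) i
    rw [rS_list] at h
    rw [h]
    rfl
  obtain ⟨xv, hx⟩ := x
  match xv, hx with
  | 0, hx =>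
      have h0 : (⟨0, hx⟩ : Fin (n+2)) = 0 := rfl
      rw [h0, Equiv.swap_apply_left, key]
      simp
  | 1, hx =>
      have h1 : (⟨1, hx⟩ : Fin (n+2)) = 1 := rfl
      rw [h1, Equiv.swap_apply_right, key]
      simp
  | (k+2), hx =>
      have hk : k < n := by omega
      have hne0 : (⟨k+2, hx⟩ : Fin (n+2)) ≠ 0 := by simp [Fin.ext_iff]
      have hne1 : (⟨k+2, hx⟩ : Fin (n+2)) ≠ 1 := by simp [Fin.ext_iff]
      rw [Equiv.swap_apply_of_ne_of_ne hne0 hne1, key]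
      simp only [List.getElem?_cons_succ, List.getElem?_map]
      rw [List.getElem?_eq_getElem (by simpa using hk)]
      simp [List.getElem_finRange, Fin.ext_iff]

def rC (n : ℕ) : Fin (n+2) → Fin 3 := fun h => if h = Fin.last (n+1) then 0 else 2

omit ha in
theorem rC_list : meurtheInvList (n+1) (rC n)
    = Fin.last (n+1) :: (List.finRange (n+1)).map Fin.castSucc := by
  have h2 : List.finRange (n+2)
      = (List.finRange (n+1)).map Fin.castSucc ++ [Fin.last (n+1)] :=
    List.finRange_succ_last (n := n+1)
  rw [meurtheInvList, h2]
  have e1 : ∀ x : Fin (n+1), rC n x.castSucc = 2 := by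
    intro x
    simp [rC, (Fin.castSucc_lt_last x).ne]
  have e2 : rC n (Fin.last (n+1)) = 0 := by simp [rC]
  simp [List.filter_append, List.filter_map, Function.comp_def, e1, e2, List.filter_cons]

theorem a_rot : a (rC n) = finRotate (n+2) := by
  apply a_eq_of a
  intro x
  have key : ∀ i : Fin (n+2), (a (rC n)).symm i
      = (Fin.last (n+1) :: (List.finRange (n+1)).map Fin.castSucc : List (Fin (n+2)))[(i:ℕ)]?.getD 0 := by
    intro i
    have h := ha (rC n) i
    rw [rC_list] at h
    rw [h]
    rfl
  obtain ⟨xv, hx⟩ := x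
  by_cases hlast : xv = n + 1
  · subst hlast
    have h0 : (⟨n+1, hx⟩ : Fin (n+2)) = Fin.last (n+1) := rfl
    rw [h0, finRotate_last, key]
    simp
  · have hxv : xv < n + 1 := by omega
    have hrot : finRotate (n+2) ⟨xv, hx⟩ = ⟨xv+1, by omega⟩ := finRotate_of_lt hxv
    rw [hrot, key]
    simp only [List.getElem?_cons_succ, List.getElem?_map]
    rw [List.getElem?_eq_getElem (by simpa using hxv)]
    simp [List.getElem_finRange, Fin.ext_iff]
end

section
variable {n : ℕ}

/-- adjacent transposition, junk value 1 out of range -/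
def tt (n j : ℕ) : Equiv.Perm (Fin (n+2)) :=
  if h : j + 1 < n + 2 then Equiv.swap ⟨j, by omega⟩ ⟨j+1, h⟩ else 1

theorem tt_inv (j : ℕ) : (tt n j)⁻¹ = tt n j := by
  unfold tt; split <;> simp

theorem tt_apply_of_ne (j : ℕ) (hj : j + 1 < n + 2) (x : Fin (n+2))
    (h1 : (x:ℕ) ≠ j) (h2 : (x:ℕ) ≠ j+1) : tt n j x = x := by
  rw [tt, dif_pos hj]
  exact Equiv.swap_apply_of_ne_of_ne (by simp [Fin.ext_iff, h1]) (by simp [Fin.ext_iff, h2])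

theorem tt_apply_snd (j : ℕ) (hj : j + 1 < n + 2) :
    tt n j ⟨j+1, hj⟩ = ⟨j, by omega⟩ := by
  rw [tt, dif_pos hj]
  exact Equiv.swap_apply_right _ _

theorem chain_spec (c : ℕ) : ∀ m : ℕ, (hmc : m + c < n + 2) →
    (((List.range' m c).map (tt n)).prod ⟨m + c, hmc⟩ = ⟨m, by omega⟩)
    ∧ ∀ x : Fin (n+2), ((x:ℕ) < m ∨ m + c < (x:ℕ)) →
      ((List.range' m c).map (tt n)).prod x = x := by
  induction c with
  | zero =>
      intro m hmc
      simp
  | succ c ih =>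
      intro m hmc
      rw [List.range'_succ, List.map_cons, List.prod_cons]
      obtain ⟨ih1, ih2⟩ := ih (m+1) (by omega)
      constructor
      · have : (⟨m + (c+1), hmc⟩ : Fin (n+2)) = ⟨(m+1) + c, by omega⟩ := by
          simp [Fin.ext_iff]; omega
        rw [Equiv.Perm.mul_apply, this, ih1]
        exact tt_apply_snd m (by omega)
      · intro x hx
        rw [Equiv.Perm.mul_apply, ih2 x (by omega), tt_apply_of_ne m (by omega) x
          (by omega) (by omega)]

theorem bubble (k : ℕ) (hk : k ≤ n + 2) (σ : Equiv.Perm (Fin (n+2)))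
    (hσ : ∀ i : Fin (n+2), k ≤ (i:ℕ) → σ i = i) :
    ∃ L : List ℕ, (∀ j ∈ L, j + 1 < n + 2) ∧ 2 * L.length ≤ k * (k-1)
      ∧ σ = (L.map (tt n)).prod := by
  induction k generalizing σ with
  | zero =>
      refine ⟨[], by simp, by simp, ?_⟩
      simp only [List.map_nil, List.prod_nil]
      ext i
      exact congrArg _ (hσ i (Nat.zero_le _))
  | succ k ih =>
      have hkn : k < n + 2 := by omega
      set j := σ.symm ⟨k, hkn⟩ with hj
      have hσj : σ j = ⟨k, hkn⟩ := σ.apply_symm_apply _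
      have hjk : (j:ℕ) ≤ k := by
        by_contra hcon
        have := hσ j (by omega)
        rw [hσj] at this
        have : k = (j:ℕ) := congrArg Fin.val this
        omega
      set P := ((List.range' (j:ℕ) (k - (j:ℕ))).map (tt n)).prod with hP
      obtain ⟨hP1, hP2⟩ := chain_spec (n:=n) (k - (j:ℕ)) (j:ℕ) (by omega)
      have hσ' : ∀ i : Fin (n+2), k ≤ (i:ℕ) → (σ * P) i = i := by
        intro i hi
        rcases Nat.eq_or_lt_of_le hi with hi' | hi'
        · have hival : i = ⟨k, hkn⟩ := Fin.ext (by simp; omega)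
          have e1 : (⟨k, hkn⟩ : Fin (n+2)) = ⟨(j:ℕ) + (k - (j:ℕ)), by omega⟩ :=
            Fin.ext (by simp; omega)
          have e2 : (⟨(j:ℕ), by omega⟩ : Fin (n+2)) = j := Fin.ext rfl
          rw [hival, Equiv.Perm.mul_apply, e1, hP, hP1, e2]
          exact hσj.trans e1
        · rw [Equiv.Perm.mul_apply, hP2 i (by omega)]
          exact hσ i (by omega)
      obtain ⟨L, hLmem, hLlen, hLprod⟩ := ih (by omega) (σ * P) hσ'
      -- σ = (σ * P) * P⁻¹ and P⁻¹ = reversed chain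
      have invprod : ∀ l : List ℕ, ((l.map (tt n)).prod)⁻¹ = ((l.reverse.map (tt n)).prod) := by
        intro l
        induction l with
        | nil => simp
        | cons x xs ihl => simp [ihl, tt_inv]
      refine ⟨L ++ (List.range' (j:ℕ) (k - (j:ℕ))).reverse, ?_, ?_, ?_⟩
      · intro x hx
        rcases List.mem_append.mp hx with h | h
        · exact hLmem x h
        · rw [List.mem_reverse, List.mem_range'_1] at h
          omega
      · rw [List.length_append, List.length_reverse, List.length_range']
        have : 2 * L.length ≤ k * (k-1) := hLlen
        have hle : k - (j:ℕ) ≤ k := by omega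
        cases k with
        | zero => simpa using hLlen
        | succ k' =>
            have h1 : 2 * L.length ≤ (k'+1) * k' := by simpa using hLlen
            have h2 : k' + 1 - (j:ℕ) ≤ k' + 1 := by omega
            simp only [Nat.add_sub_cancel]
            calc 2 * (L.length + (k' + 1 - (j:ℕ)))
                = 2 * L.length + 2 * (k' + 1 - (j:ℕ)) := by ring
              _ ≤ (k'+1) * k' + 2 * (k'+1) := Nat.add_le_add h1 (Nat.mul_le_mul_left 2 h2)
              _ = (k'+1+1) * (k'+1) := by ring
      · rw [List.map_append, List.prod_append, ← invprod, ← hLprod]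
        exact (mul_inv_cancel_right σ P).symm
end

section
variable {n : ℕ} (a : (Fin (n + 2) → Fin 3) → Equiv.Perm (Fin (n + 2)))
  (ha : ∀ (r : Fin (n + 2) → Fin 3) (i : Fin (n + 2)),
      (meurtheInvList (n + 1) r)[(i : ℕ)]? = some ((a r).symm i))

def glist (n j : ℕ) : List (Fin (n+2) → Fin 3) :=
  List.replicate j (rC n) ++ rS n :: List.replicate (n + 2 - j) (rC n)

theorem glist_length (j : ℕ) (hj : j ≤ n + 2) : (glist n j).length = n + 3 := by
  simp [glist]
  omega

include ha

theorem glist_prod (j : ℕ) (hj : j + 1 < n + 2) :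
    ((glist n j).map a).prod = tt n j := by
  simp only [glist, List.map_append, List.map_cons, List.map_replicate,
    List.prod_append, List.prod_cons, List.prod_replicate, a_rot a ha, a_swap a ha]
  set c := finRotate (n+2)
  have hcj : c^j * c^(n+2-j) = 1 := by
    rw [← pow_add, show j + (n+2-j) = n+2 by omega]
    exact rot_pow_card (n+1)
  have hinv : c^(n+2-j) = (c^j)⁻¹ := by
    rw [eq_inv_iff_mul_eq_one, ← pow_add, show (n+2-j) + j = n+2 by omega]
    exact rot_pow_card (n+1)
  rw [hinv, tt, dif_pos hj]
  have h0 : (⟨j, by omega⟩ : Fin (n+2)) = (c^j) 0 := (rot_pow_zero n j (by omega)).symm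
  have h1 : (⟨j+1, hj⟩ : Fin (n+2)) = (c^j) 1 := (rot_pow_one n j hj).symm
  rw [h0, h1, Equiv.swap_apply_apply]
  group

theorem expand_list (L : List ℕ) (hmem : ∀ j ∈ L, j + 1 < n + 2) :
    (((L.map (glist n)).flatten).map a).prod = (L.map (tt n)).prod
    ∧ ((L.map (glist n)).flatten).length = (n+3) * L.length := by
  induction L with
  | nil => simp
  | cons x xs ih =>
      have hx := hmem x (by simp)
      obtain ⟨ih1, ih2⟩ := ih (fun j hj => hmem j (by simp [hj]))
      constructor
      · simp only [List.map_cons, List.flatten_cons, List.map_append, List.prod_append,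
          ih1, glist_prod a ha x hx, List.prod_cons]
      · rw [List.map_cons, List.flatten_cons, List.length_append, ih2,
          glist_length (n:=n) x (by omega), List.length_cons]
        ring

theorem part1 (σ : Equiv.Perm (Fin (n+2))) :
    ∃ L : List (Fin (n + 2) → Fin 3),
      L.length = (n + 3) * (n + 2) * (n + 1) / 2 ∧ (L.map a).prod = σ := by
  obtain ⟨L, hmem, hlen, hprod⟩ := bubble (n + 2) le_rfl σ
    (fun i hi => absurd i.isLt (by omega))
  obtain ⟨hp, hl⟩ := expand_list a ha L hmem
  have hlen' : 2 * L.length ≤ (n+2) * (n+1) := by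
    have h21 : n + 2 - 1 = n + 1 := by omega
    rwa [h21] at hlen
  have hdvd : 2 ∣ (n+2) * (n+1) := by
    have h := (Nat.even_mul_succ_self (n+1)).two_dvd
    rwa [mul_comm] at h
  have hN : (n + 3) * (n + 2) * (n + 1) / 2 = (n+3) * ((n+2) * (n+1) / 2) := by
    rw [mul_assoc, Nat.mul_div_assoc _ hdvd]
  have hlen2 : L.length ≤ (n+2) * (n+1) / 2 := by
    rw [Nat.le_div_iff_mul_le two_pos, mul_comm]
    exact hlen'
  have hle : (n+3) * L.length ≤ (n + 3) * (n + 2) * (n + 1) / 2 := by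
    rw [hN]
    exact Nat.mul_le_mul_left _ hlen2
  refine ⟨(L.map (glist n)).flatten
    ++ List.replicate ((n + 3) * (n + 2) * (n + 1) / 2 - (n+3) * L.length)
        (fun _ => (2 : Fin 3)), ?_, ?_⟩
  · rw [List.length_append, List.length_replicate, hl]
    exact Nat.add_sub_cancel' hle
  · rw [List.map_append, List.prod_append, hp, List.map_replicate, a_id a ha,
      List.prod_replicate, one_pow, mul_one, hprod]
end

section
variable {n : ℕ} (a : (Fin (n + 2) → Fin 3) → Equiv.Perm (Fin (n + 2)))

/-- number of sequences of length m composing to σ -/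
noncomputable def ff (m : ℕ) (σ : Equiv.Perm (Fin (n+2))) : ℕ :=
  (Finset.univ.filter
    (fun R : Fin m → (Fin (n + 2) → Fin 3) =>
      (List.ofFn (fun t => a (R t))).prod = σ)).card

theorem F1 (m : ℕ) : ∑ σ : Equiv.Perm (Fin (n+2)), ff a m σ = (3^(n+2))^m := by
  classical
  have h := Finset.card_eq_sum_card_fiberwise
    (s := (Finset.univ : Finset (Fin m → (Fin (n + 2) → Fin 3))))
    (t := (Finset.univ : Finset (Equiv.Perm (Fin (n+2)))))
    (f := fun R => (List.ofFn (fun t => a (R t))).prod) (fun x _ => Finset.mem_univ _)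
  have hff : ∑ σ : Equiv.Perm (Fin (n+2)), ff a m σ
      = (Finset.univ : Finset (Fin m → (Fin (n + 2) → Fin 3))).card := by
    rw [h]
    exact Finset.sum_congr rfl (fun σ _ => rfl)
  rw [hff, Finset.card_univ]
  simp [Fintype.card_fun]

theorem F2 (m : ℕ) (σ : Equiv.Perm (Fin (n+2))) :
    ff a (m+1) σ = ∑ r : Fin (n + 2) → Fin 3, ff a m ((a r)⁻¹ * σ) := by
  classical
  rw [ff, Finset.card_eq_sum_card_fiberwise
    (f := fun R : Fin (m+1) → (Fin (n + 2) → Fin 3) => R 0)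
    (t := Finset.univ) (fun x _ => Finset.mem_univ _)]
  apply Finset.sum_congr rfl
  intro r _
  rw [ff]
  apply Finset.card_bij (fun R _ => fun t : Fin m => R t.succ)
  · intro R hR
    simp only [Finset.mem_filter, Finset.mem_univ, true_and] at hR ⊢
    obtain ⟨h1, h2⟩ := hR
    rw [List.ofFn_succ, List.prod_cons] at h1
    rw [eq_inv_mul_iff_mul_eq, ← h2]
    exact h1
  · intro R hR S hS hRS
    simp only [Finset.mem_filter, Finset.mem_univ, true_and] at hR hS
    funext t
    refine Fin.cases ?_ ?_ t
    · rw [hR.2, hS.2]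
    · intro i
      exact congrFun hRS i
  · intro R' hR'
    simp only [Finset.mem_filter, Finset.mem_univ, true_and] at hR'
    refine ⟨Fin.cons r R', ?_, ?_⟩
    · simp only [Finset.mem_filter, Finset.mem_univ, true_and]
      constructor
      · rw [List.ofFn_succ, List.prod_cons]
        simp only [Fin.cons_zero, Fin.cons_succ]
        rw [hR', mul_inv_cancel_left]
      · simp
    · funext t
      simp [Fin.cons_succ]

/-- the step distribution probabilities -/
noncomputable def qq (m : ℕ) (σ : Equiv.Perm (Fin (n+2))) : ℝ :=
  (ff a m σ : ℝ) / ((3:ℝ)^(n+2))^m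

theorem D_pos : (0:ℝ) < (3:ℝ)^(n+2) := by positivity

theorem qq_nonneg (m : ℕ) (σ : Equiv.Perm (Fin (n+2))) : 0 ≤ qq a m σ := by
  unfold qq; positivity

theorem qq_sum (m : ℕ) : ∑ σ : Equiv.Perm (Fin (n+2)), qq a m σ = 1 := by
  unfold qq
  rw [← Finset.sum_div]
  rw [div_eq_one_iff_eq (by positivity)]
  rw [← Nat.cast_sum, F1]
  push_cast
  ring

theorem qq_zero (σ : Equiv.Perm (Fin (n+2))) :
    qq a 0 σ = if σ = 1 then 1 else 0 := by
  classical
  unfold qq ff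
  have : (List.ofFn (fun t : Fin 0 => a ((fun _ => (fun _ => (0:Fin 3))) t))).prod = 1 := by simp
  by_cases h : σ = 1
  · subst h
    rw [if_pos rfl]
    have he : (Finset.univ.filter
        (fun R : Fin 0 → (Fin (n + 2) → Fin 3) =>
          (List.ofFn (fun t => a (R t))).prod = 1)) = Finset.univ := by
      apply Finset.filter_true_of_mem
      intro R _
      simp
    rw [he, Finset.card_univ]
    simp [Fintype.card_fun]
  · rw [if_neg h]
    have he : (Finset.univ.filter
        (fun R : Fin 0 → (Fin (n + 2) → Fin 3) =>
          (List.ofFn (fun t => a (R t))).prod = σ)) = ∅ := by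
      apply Finset.filter_false_of_mem
      intro R _
      simpa using (Ne.symm h)
    rw [he]
    simp

theorem qq_rec (m : ℕ) (σ : Equiv.Perm (Fin (n+2))) :
    qq a (m+1) σ = ∑ r : Fin (n + 2) → Fin 3,
      (((3:ℝ)^(n+2))⁻¹) * qq a m ((a r)⁻¹ * σ) := by
  unfold qq
  rw [F2]
  push_cast
  rw [Finset.sum_div]
  apply Finset.sum_congr rfl
  intro r _
  rw [pow_succ]
  ring

theorem qq_conv (k m : ℕ) (σ : Equiv.Perm (Fin (n+2))) :
    qq a (k + m) σ = ∑ τ : Equiv.Perm (Fin (n+2)), qq a k τ * qq a m (τ⁻¹ * σ) := by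
  classical
  induction k generalizing σ with
  | zero =>
      simp only [Nat.zero_add, qq_zero, ite_mul, one_mul, zero_mul]
      rw [Finset.sum_ite_eq' Finset.univ (1 : Equiv.Perm (Fin (n+2)))
        (fun τ => qq a m (τ⁻¹ * σ))]
      simp
  | succ k ih =>
      have harr : k + 1 + m = (k + m) + 1 := by omega
      rw [harr, qq_rec, ]
      have hstep : ∀ r : Fin (n + 2) → Fin 3,
          ((3:ℝ)^(n+2))⁻¹ * qq a (k + m) ((a r)⁻¹ * σ)
          = ∑ τ : Equiv.Perm (Fin (n+2)),
              ((3:ℝ)^(n+2))⁻¹ * qq a k ((a r)⁻¹ * τ) * qq a m (τ⁻¹ * σ) := by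
        intro r
        rw [ih ((a r)⁻¹ * σ), Finset.mul_sum]
        rw [← Equiv.sum_comp (Equiv.mulLeft (a r))
          (fun τ => ((3:ℝ)^(n+2))⁻¹ * qq a k ((a r)⁻¹ * τ) * qq a m (τ⁻¹ * σ))]
        apply Finset.sum_congr rfl
        intro τ _
        simp only [Equiv.coe_mulLeft, mul_inv_rev, inv_mul_cancel_left, mul_assoc]
      rw [Finset.sum_congr rfl (fun r _ => hstep r), Finset.sum_comm]
      apply Finset.sum_congr rfl
      intro τ _
      rw [qq_rec]
      rw [Finset.sum_mul]

theorem E_le_two (u : ℝ) (hu : u = ((Fintype.card (Equiv.Perm (Fin (n+2))) : ℝ))⁻¹) (m : ℕ) :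
    ∑ σ : Equiv.Perm (Fin (n+2)), |qq a m σ - u| ≤ 2 := by
  have hcG : (0:ℝ) < (Fintype.card (Equiv.Perm (Fin (n+2))) : ℝ) := by
    exact_mod_cast Fintype.card_pos
  have h1 : ∀ σ : Equiv.Perm (Fin (n+2)), |qq a m σ - u| ≤ qq a m σ + u := by
    intro σ
    have h0 : 0 ≤ qq a m σ := qq_nonneg a m σ
    have hu0 : 0 ≤ u := by rw [hu]; positivity
    rw [abs_sub_le_iff]
    constructor <;> nlinarith
  calc ∑ σ : Equiv.Perm (Fin (n+2)), |qq a m σ - u|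
      ≤ ∑ σ : Equiv.Perm (Fin (n+2)), (qq a m σ + u) := Finset.sum_le_sum (fun σ _ => h1 σ)
    _ = 1 + (Fintype.card (Equiv.Perm (Fin (n+2))) : ℝ) * u := by
        rw [Finset.sum_add_distrib, qq_sum, Finset.sum_const, Finset.card_univ, nsmul_eq_mul]
    _ ≤ 2 := by rw [hu, mul_inv_cancel₀ (ne_of_gt hcG)]; norm_num

theorem E_contract (N : ℕ) (hpos : ∀ σ, 1 ≤ ff a N σ)
    (u : ℝ) (hu : u = ((Fintype.card (Equiv.Perm (Fin (n+2))) : ℝ))⁻¹) (m : ℕ) :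
    ∑ σ : Equiv.Perm (Fin (n+2)), |qq a (N + m) σ - u|
      ≤ (1 - (Fintype.card (Equiv.Perm (Fin (n+2))) : ℝ) * (((3:ℝ)^(n+2))^N)⁻¹)
        * ∑ σ : Equiv.Perm (Fin (n+2)), |qq a m σ - u| := by
  classical
  set cG := ((Fintype.card (Equiv.Perm (Fin (n+2))) : ℝ)) with hcGdef
  have hcG : (0:ℝ) < cG := by
    rw [hcGdef]; exact_mod_cast Fintype.card_pos
  set ε := (((3:ℝ)^(n+2))^N)⁻¹ with hεdef
  have hε0 : (0:ℝ) < ε := by rw [hεdef]; positivity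
  set g : Equiv.Perm (Fin (n+2)) → ℝ := fun τ => qq a N τ - ε with hgdef
  have hgnn : ∀ τ, 0 ≤ g τ := by
    intro τ
    have h1 : (1:ℝ) ≤ (ff a N τ : ℝ) := by exact_mod_cast hpos τ
    have : ε ≤ qq a N τ := by
      rw [hεdef, qq, inv_eq_one_div]
      gcongr
    simp only [hgdef]
    linarith
  have hgsum : ∑ τ : Equiv.Perm (Fin (n+2)), g τ = 1 - cG * ε := by
    simp only [hgdef]
    rw [Finset.sum_sub_distrib, qq_sum, Finset.sum_const, Finset.card_univ, nsmul_eq_mul]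
  have hcGu : cG * u = 1 := by rw [hu]; exact mul_inv_cancel₀ hcG.ne'
  have hshift : ∀ σ : Equiv.Perm (Fin (n+2)),
      ∑ τ : Equiv.Perm (Fin (n+2)), qq a m (τ⁻¹ * σ) = 1 := by
    intro σ
    have := Equiv.sum_comp ((Equiv.inv (Equiv.Perm (Fin (n+2)))).trans
      (Equiv.mulRight σ)) (fun τ => qq a m τ)
    simp only [Equiv.trans_apply, Equiv.inv_apply, Equiv.coe_mulRight] at this
    rw [this, qq_sum]
  have hkey : ∀ σ : Equiv.Perm (Fin (n+2)), qq a (N+m) σ - u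
      = ∑ τ : Equiv.Perm (Fin (n+2)), g τ * (qq a m (τ⁻¹ * σ) - u) := by
    intro σ
    have e1 : qq a (N+m) σ = (∑ τ : Equiv.Perm (Fin (n+2)), g τ * qq a m (τ⁻¹ * σ))
        + ε * ∑ τ : Equiv.Perm (Fin (n+2)), qq a m (τ⁻¹ * σ) := by
      rw [qq_conv, Finset.mul_sum, ← Finset.sum_add_distrib]
      apply Finset.sum_congr rfl
      intro τ _
      simp only [hgdef]
      ring
    rw [e1, hshift σ, mul_one]
    have e2 : ∑ τ : Equiv.Perm (Fin (n+2)), g τ * (qq a m (τ⁻¹ * σ) - u)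
        = (∑ τ : Equiv.Perm (Fin (n+2)), g τ * qq a m (τ⁻¹ * σ))
          - (∑ τ : Equiv.Perm (Fin (n+2)), g τ) * u := by
      rw [Finset.sum_mul, ← Finset.sum_sub_distrib]
      apply Finset.sum_congr rfl
      intro τ _
      ring
    rw [e2, hgsum]
    linear_combination (-ε) * hcGu
  calc ∑ σ : Equiv.Perm (Fin (n+2)), |qq a (N + m) σ - u|
      ≤ ∑ σ : Equiv.Perm (Fin (n+2)), ∑ τ : Equiv.Perm (Fin (n+2)),
          g τ * |qq a m (τ⁻¹ * σ) - u| := by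
        apply Finset.sum_le_sum
        intro σ _
        rw [hkey σ]
        refine le_trans (Finset.abs_sum_le_sum_abs _ _) ?_
        apply Finset.sum_le_sum
        intro τ _
        rw [abs_mul, abs_of_nonneg (hgnn τ)]
    _ = ∑ τ : Equiv.Perm (Fin (n+2)), g τ * ∑ σ : Equiv.Perm (Fin (n+2)),
          |qq a m (τ⁻¹ * σ) - u| := by
        rw [Finset.sum_comm]
        apply Finset.sum_congr rfl
        intro τ _
        rw [Finset.mul_sum]
    _ = ∑ τ : Equiv.Perm (Fin (n+2)), g τ * ∑ σ : Equiv.Perm (Fin (n+2)),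
          |qq a m σ - u| := by
        apply Finset.sum_congr rfl
        intro τ _
        congr 1
        have := Equiv.sum_comp (Equiv.mulLeft τ⁻¹) (fun σ => |qq a m σ - u|)
        simp only [Equiv.coe_mulLeft] at this
        rw [this]
    _ = (1 - cG * ε) * ∑ σ : Equiv.Perm (Fin (n+2)), |qq a m σ - u| := by
        rw [← Finset.sum_mul, hgsum]

theorem neutral_of_pos (N : ℕ) (hN : 0 < N) (hpos : ∀ σ, 1 ≤ ff a N σ) :
    NeutralOrientation a := by
  classical
  set cG := ((Fintype.card (Equiv.Perm (Fin (n+2))) : ℝ)) with hcGdef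
  have hcG : (0:ℝ) < cG := by rw [hcGdef]; exact_mod_cast Fintype.card_pos
  set u : ℝ := cG⁻¹ with hudef
  set ε := (((3:ℝ)^(n+2))^N)⁻¹ with hεdef
  have hε0 : (0:ℝ) < ε := by rw [hεdef]; positivity
  set ρ := 1 - cG * ε with hρdef
  have hεq : ∀ τ, ε ≤ qq a N τ := by
    intro τ
    have h1 : (1:ℝ) ≤ (ff a N τ : ℝ) := by exact_mod_cast hpos τ
    rw [hεdef, qq, inv_eq_one_div]
    gcongr
  have hρ0 : 0 ≤ ρ := by
    have h1 : ∑ τ : Equiv.Perm (Fin (n+2)), ε ≤ ∑ τ : Equiv.Perm (Fin (n+2)), qq a N τ :=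
      Finset.sum_le_sum (fun τ _ => hεq τ)
    rw [qq_sum, Finset.sum_const, Finset.card_univ, nsmul_eq_mul] at h1
    rw [hρdef]
    linarith
  have hρ1 : ρ < 1 := by
    rw [hρdef]
    nlinarith
  set E : ℕ → ℝ := fun m => ∑ σ : Equiv.Perm (Fin (n+2)), |qq a m σ - u| with hEdef
  have hEnn : ∀ m, 0 ≤ E m := by
    intro m
    exact Finset.sum_nonneg (fun σ _ => abs_nonneg _)
  have hE2 : ∀ m, E m ≤ 2 := fun m => E_le_two a u hudef m
  have hcontract : ∀ m, E (N + m) ≤ ρ * E m := fun m => E_contract a N hpos u hudef m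
  have hiter : ∀ k m, E (k * N + m) ≤ ρ^k * E m := by
    intro k
    induction k with
    | zero => intro m; simpa using le_refl (E m)
    | succ k ih =>
        intro m
        have harr : (k+1) * N + m = N + (k * N + m) := by ring
        rw [harr]
        calc E (N + (k * N + m)) ≤ ρ * E (k * N + m) := hcontract _
          _ ≤ ρ * (ρ^k * E m) := mul_le_mul_of_nonneg_left (ih m) hρ0
          _ = ρ^(k+1) * E m := by ring
  have hbound : ∀ m, E m ≤ 2 * ρ^(m / N) := by
    intro m
    have harr : (m / N) * N + m % N = m := Nat.div_add_mod' m N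
    calc E m = E ((m / N) * N + m % N) := by rw [harr]
      _ ≤ ρ^(m / N) * E (m % N) := hiter _ _
      _ ≤ ρ^(m / N) * 2 := mul_le_mul_of_nonneg_left (hE2 _) (pow_nonneg hρ0 _)
      _ = 2 * ρ^(m / N) := by ring
  have hdiv : Filter.Tendsto (fun m : ℕ => m / N) Filter.atTop Filter.atTop := by
    apply Filter.tendsto_atTop_atTop.mpr
    intro b
    refine ⟨N * b, fun m hm => ?_⟩
    rw [Nat.le_div_iff_mul_le hN]
    rwa [Nat.mul_comm]
  have htend0 : Filter.Tendsto (fun m : ℕ => (2:ℝ) * ρ^(m / N)) Filter.atTop (nhds 0) := by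
    have h1 := (tendsto_pow_atTop_nhds_zero_of_lt_one hρ0 hρ1).comp hdiv
    have h2 := h1.const_mul (2:ℝ)
    simpa using h2
  have hpt : ∀ σ : Equiv.Perm (Fin (n+2)),
      Filter.Tendsto (fun m => qq a m σ) Filter.atTop (nhds u) := by
    intro σ
    have h1 : ∀ m, ‖qq a m σ - u‖ ≤ 2 * ρ^(m / N) := by
      intro m
      refine le_trans ?_ (hbound m)
      rw [Real.norm_eq_abs]
      exact Finset.single_le_sum (f := fun σ => |qq a m σ - u|)
        (fun σ _ => abs_nonneg _) (Finset.mem_univ σ)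
    have h2 := squeeze_zero_norm h1 htend0
    have h3 := h2.add_const u
    simpa using h3
  rw [NeutralOrientation]
  rw [tendsto_pi_nhds]
  intro σ
  have hcι : ((Fintype.card (Fin (n + 2) → Fin 3) : ℝ)) = (3:ℝ)^(n+2) := by
    rw [Fintype.card_fun]
    push_cast
    norm_num
  have hfact : ((Nat.factorial (n+2) : ℝ))⁻¹ = u := by
    rw [hudef, hcGdef]
    congr 1
    rw [Fintype.card_perm]
    congr 1
    simp
  rw [hfact]
  have heq : (fun m : ℕ => ((Finset.univ.filter
      (fun R : Fin m → (Fin (n + 2) → Fin 3) =>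
        (List.ofFn (fun t => a (R t))).prod = σ)).card : ℝ)
      / (Fintype.card (Fin (n + 2) → Fin 3) : ℝ) ^ m) = fun m => qq a m σ := by
    funext m
    rw [qq, ff, hcι]
  rw [heq]
  exact hpt σ
end


section
variable {n : ℕ} (a : (Fin (n + 2) → Fin 3) → Equiv.Perm (Fin (n + 2)))

theorem ff_pos (N : ℕ) (σ : Equiv.Perm (Fin (n+2)))
    (h : ∃ L : List (Fin (n + 2) → Fin 3), L.length = N ∧ (L.map a).prod = σ) :
    1 ≤ ff a N σ := by
  classical
  obtain ⟨L, hlen, hprod⟩ := h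
  rw [← hlen]
  refine Finset.card_pos.mpr ⟨fun t => L.get t, ?_⟩
  simp only [Finset.mem_filter, Finset.mem_univ, true_and]
  have h2 : (List.ofFn fun t => a (L.get t)) = (List.ofFn L.get).map a :=
    (List.map_ofFn).symm
  rw [h2, List.ofFn_get, hprod]
end

theorem meurthe_compositions_and_neutralOrientation
    (n : ℕ) (a : (Fin (n + 2) → Fin 3) → Equiv.Perm (Fin (n + 2)))
    (ha : ∀ (r : Fin (n + 2) → Fin 3) (i : Fin (n + 2)),
      (meurtheInvList (n + 1) r)[(i : ℕ)]? = some ((a r).symm i)) :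
    (∀ σ : Equiv.Perm (Fin (n + 2)),
      ∃ L : List (Fin (n + 2) → Fin 3),
        L.length = (n + 3) * (n + 2) * (n + 1) / 2 ∧ (L.map a).prod = σ) ∧
    NeutralOrientation a := by
  have hN : 0 < (n + 3) * (n + 2) * (n + 1) / 2 := by
    have h6 : 2 ≤ (n+3) * (n+2) * (n+1) := by
      calc 2 ≤ 3 * 2 * 1 := by norm_num
        _ ≤ (n+3) * (n+2) * (n+1) :=
          Nat.mul_le_mul (Nat.mul_le_mul (by omega) (by omega)) (by omega)
    exact Nat.div_pos h6 two_pos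
  refine ⟨part1 a ha, ?_⟩
  apply neutral_of_pos a ((n + 3) * (n + 2) * (n + 1) / 2) hN
  intro σ
  exact ff_pos a _ σ (part1 a ha σ)
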